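/- Suppose a Hermitian n×n matrix ρ is supported on a subspace V (ρ = P_V ρ P_V), and each F_α acts invariantly on V (F_α V ⊆ V) with coefficients c_{in}^α defined by F_α|i⟩ = ∑_n c_{in}^α |n⟩ in an orthonormal basis {|i⟩} of V. If for every density matrix ρ supported on V and all α,β the quantity L_{F_α,F_β}[ρ] = [F_α, ρF_β†] + [F_α ρ, F_β†] vanishes, then the matrix (c_{in}^α) must be diagonal: c_{in}^α = c_i^α δ_{in}, with c_i^α independent of i. -/

import Mathlib

open Matrix

theorem stmt_11 {n N₀ M : ℕ} (e : Fin N₀ → (Fin n → ℂ))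
    (horth : ∀ i j, star (e i) ⬝ᵥ e j = if i = j then (1 : ℂ) else 0)
    (F : Fin M → Matrix (Fin n) (Fin n) ℂ)
    (c : Fin M → Fin N₀ → Fin N₀ → ℂ)
    (hinv : ∀ α i, (F α) *ᵥ (e i) = ∑ m, c α i m • e m)
    (hL : ∀ r : Matrix (Fin N₀) (Fin N₀) ℂ, ∀ α β,
      (F α * ((∑ i, ∑ j, r i j • vecMulVec (e i) (star (e j))) * (F β)ᴴ)
        - (∑ i, ∑ j, r i j • vecMulVec (e i) (star (e j))) * (F β)ᴴ * F α)
      + (F α * (∑ i, ∑ j, r i j • vecMulVec (e i) (star (e j))) * (F β)ᴴ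
        - (F β)ᴴ * (F α * (∑ i, ∑ j, r i j • vecMulVec (e i) (star (e j))))) = 0) :
    ∃ k : Fin M → ℂ, ∀ α i m, c α i m = if i = m then k α else 0 := by
  classical
  have hvmv : ∀ (u v x : Fin n → ℂ), (vecMulVec u v) *ᵥ x = (v ⬝ᵥ x) • u := by
    intro u v x
    ext k
    simp only [vecMulVec_apply, mulVec, dotProduct, Pi.smul_apply, smul_eq_mul, Finset.sum_mul]
    exact Finset.sum_congr rfl fun _ _ => by ring
  have hstar_sum : ∀ (d : Fin N₀ → ℂ) (y : Fin n → ℂ),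
      star (∑ m, d m • e m) ⬝ᵥ y = ∑ m, (starRingEnd ℂ) (d m) * (star (e m) ⬝ᵥ y) := by
    intro d y
    simp only [dotProduct, Pi.star_apply, Finset.sum_apply, Pi.smul_apply, smul_eq_mul,
      star_sum, star_mul', Finset.sum_mul, Finset.mul_sum, RCLike.star_def]
    rw [Finset.sum_comm]
    exact Finset.sum_congr rfl fun _ _ => Finset.sum_congr rfl fun _ _ => by ring
  have hsum_right : ∀ (d : Fin N₀ → ℂ) (y : Fin n → ℂ),
      y ⬝ᵥ (∑ m, d m • e m) = ∑ m, d m * (y ⬝ᵥ e m) := by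
    intro d y
    simp only [dotProduct, Finset.sum_apply, Pi.smul_apply, smul_eq_mul, Finset.mul_sum,
      Finset.sum_mul]
    rw [Finset.sum_comm]
    exact Finset.sum_congr rfl fun _ _ => Finset.sum_congr rfl fun _ _ => by ring
  have hH : ∀ (A : Matrix (Fin n) (Fin n) ℂ) (u v : Fin n → ℂ),
      star u ⬝ᵥ (Aᴴ *ᵥ v) = star (A *ᵥ u) ⬝ᵥ v := by
    intro A u v
    rw [dotProduct_mulVec, ← star_mulVec]
  have hdot2 : ∀ γ a b, star (e a) ⬝ᵥ (F γ *ᵥ e b) = c γ b a := by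
    intro γ a b
    rw [hinv, hsum_right]
    simp [horth, Finset.sum_ite_eq]
  have hdot1 : ∀ γ a b, star (e a) ⬝ᵥ ((F γ)ᴴ *ᵥ e b) = (starRingEnd ℂ) (c γ a b) := by
    intro γ a b
    rw [hH, hinv, hstar_sum]
    simp [horth, Finset.sum_ite_eq']
  have hdot3 : ∀ γ δ a b, star (e a) ⬝ᵥ ((F γ)ᴴ *ᵥ (F δ *ᵥ e b)) =
      ∑ m, (starRingEnd ℂ) (c γ a m) * c δ b m := by
    intro γ δ a b
    rw [hH, hinv, hstar_sum]
    exact Finset.sum_congr rfl fun m _ => by rw [hdot2]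
  have key : ∀ α β (i j p q : Fin N₀),
      2 * (c α i q * (starRingEnd ℂ) (c β j p)) =
        (if q = i then 1 else 0) * (∑ m, (starRingEnd ℂ) (c β j m) * c α p m)
        + (if j = p then 1 else 0) * (∑ m, (starRingEnd ℂ) (c β q m) * c α i m) := by
    intro α β i j p q
    have h := hL (fun a b => if a = i then (if b = j then 1 else 0) else 0) α β
    rw [show (∑ a, ∑ b, (if a = i then (if b = j then (1:ℂ) else 0) else 0) •
        vecMulVec (e a) (star (e b))) = vecMulVec (e i) (star (e j)) from by
      simp [ite_smul, Finset.sum_ite_eq]] at h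
    have h2 := congrArg (fun M : Matrix (Fin n) (Fin n) ℂ => star (e q) ⬝ᵥ (M *ᵥ e p)) h
    simp only [add_mulVec, sub_mulVec, dotProduct_add, dotProduct_sub, ← mulVec_mulVec,
      zero_mulVec, dotProduct_zero] at h2
    rw [hvmv, hvmv, hvmv] at h2
    simp only [mulVec_smul, dotProduct_smul, smul_eq_mul] at h2
    rw [hH (F β) (e j) (F α *ᵥ e p), hinv β j, hstar_sum] at h2
    simp only [hdot2, hdot1, hdot3, horth] at h2
    linear_combination h2
  -- Step A: off-diagonal coefficients vanish
  have hoff : ∀ α i m, m ≠ i → c α i m = 0 := by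
    intro α i m hm
    have keyii := key α α i i i i
    simp only [eq_self_iff_true, if_true, one_mul] at keyii
    have hS : ∑ m, (starRingEnd ℂ) (c α i m) * c α i m =
        c α i i * (starRingEnd ℂ) (c α i i) := by linear_combination (-1/2 : ℂ) * keyii
    have hrealC : ((∑ m, Complex.normSq (c α i m) : ℝ) : ℂ) =
        ((Complex.normSq (c α i i) : ℝ) : ℂ) := by
      push_cast
      rw [show (∑ m, (Complex.normSq (c α i m) : ℂ)) =
          ∑ m, (starRingEnd ℂ) (c α i m) * c α i m from
        Finset.sum_congr rfl fun m _ => by rw [mul_comm, Complex.mul_conj]]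
      rw [hS, Complex.mul_conj]
    have hreal : ∑ m, Complex.normSq (c α i m) = Complex.normSq (c α i i) := by
      exact_mod_cast hrealC
    have hsum0 : ∑ m ∈ Finset.univ.erase i, Complex.normSq (c α i m) = 0 := by
      have h4 := Finset.add_sum_erase Finset.univ
        (fun m => Complex.normSq (c α i m)) (Finset.mem_univ i)
      linarith [hreal, h4]
    have h5 := (Finset.sum_eq_zero_iff_of_nonneg
      (fun x _ => Complex.normSq_nonneg (c α i x))).mp hsum0 m
      (Finset.mem_erase.mpr ⟨hm, Finset.mem_univ m⟩)
    exact Complex.normSq_eq_zero.mp h5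
  -- Step B: diagonal entries are constant
  have hdiag : ∀ α (i j : Fin N₀), c α i i = c α j j := by
    intro α i j
    have k1 := key α α i j j i
    simp only [eq_self_iff_true, if_true, one_mul] at k1
    have hsj : ∑ m, (starRingEnd ℂ) (c α j m) * c α j m =
        (starRingEnd ℂ) (c α j j) * c α j j := by
      rw [Finset.sum_eq_single j]
      · intro b _ hb
        rw [hoff α j b hb, mul_zero]
      · intro h; exact absurd (Finset.mem_univ j) h
    have hsi : ∑ m, (starRingEnd ℂ) (c α i m) * c α i m =
        (starRingEnd ℂ) (c α i i) * c α i i := by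
      rw [Finset.sum_eq_single i]
      · intro b _ hb
        rw [hoff α i b hb, mul_zero]
      · intro h; exact absurd (Finset.mem_univ i) h
    rw [hsj, hsi] at k1
    have k2 := congrArg (starRingEnd ℂ) k1
    simp only [_root_.map_mul, map_add, map_ofNat, Complex.conj_conj] at k2
    have hz : (c α i i - c α j j) * (starRingEnd ℂ) (c α i i - c α j j) = 0 := by
      rw [map_sub]
      linear_combination (-1/2 : ℂ) * k1 + (-1/2 : ℂ) * k2
    rcases mul_eq_zero.mp hz with h | h
    · exact sub_eq_zero.mp h
    · have h' : c α i i - c α j j = 0 := by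
        have h2 := congrArg (starRingEnd ℂ) h
        simpa using h2
      exact sub_eq_zero.mp h'
  refine ⟨fun α => if h : 0 < N₀ then c α ⟨0, h⟩ ⟨0, h⟩ else 0, fun α i m => ?_⟩
  dsimp only
  by_cases him : i = m
  · subst him
    rw [if_pos rfl, dif_pos i.pos]
    exact hdiag α i ⟨0, i.pos⟩
  · rw [if_neg him]
    exact hoff α i m (fun h => him h.symm)
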